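/- For every i ∈ {1,…,k}, every ε > 0, and every natural number j, if (1+ε)^j · w_{m_i} < Σ_{j'=1}^{m_{i+1}−1} w_{j'}, then j < (m_{i+1} − m_i) · (ln 2 / ln(1+ε)). Consequently, the (w_{m_i}, s_i, 1+ε)-jump, where s_i = Σ_{j'=1}^{m_{i+1}−1} w_{j'}, has at most (m_{i+1} − m_i) · (ln 2 / ln(1+ε)) + 2 elements. -/

import Mathlib

/-- The `(α, β, τ)`-jump: the set `{α, τα, τ²α, …, τ^k α, β}` where
`τ^k α < β ≤ τ^{k+1} α`, i.e. all powers `τ^j α` that are `< β`, together with `β`. -/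
def jump (α β τ : ℝ) : Set ℝ :=
  {x | ∃ j : ℕ, x = τ ^ j * α ∧ τ ^ j * α < β} ∪ {β}

/-- Context: `n ≥ 2`, positive nondecreasing weights `w 1 ≤ ⋯ ≤ w (n-1)`,
the index set `I = {m ∈ {1,…,n−1} : ∑_{i=1}^{m−1} w i < w m}` is enumerated
as `m 1 < m 2 < ⋯ < m k`, and `m (k+1) = n`.
Statement: for every `i ∈ {1,…,k}`, every `ε > 0` and every `j : ℕ`, if
`(1+ε)^j * w (m i) < ∑_{j'=1}^{m (i+1) − 1} w j'` then
`j < (m (i+1) − m i) * (ln 2 / ln (1+ε))`; consequently the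
`(w (m i), s i, 1+ε)`-jump, where `s i = ∑_{j'=1}^{m (i+1) − 1} w j'`, is finite
and has at most `(m (i+1) − m i) * (ln 2 / ln (1+ε)) + 2` elements. -/
theorem stmt_2 (n k : ℕ) (hn : 2 ≤ n) (w : ℕ → ℝ)
    (hpos : ∀ i, 1 ≤ i → i ≤ n - 1 → 0 < w i)
    (hmono : ∀ i j, 1 ≤ i → i ≤ j → j ≤ n - 1 → w i ≤ w j)
    (m : ℕ → ℕ)
    (hI : ∀ x, ((1 ≤ x ∧ x ≤ n - 1) ∧ ∑ i ∈ Finset.Icc 1 (x - 1), w i < w x) ↔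
      ∃ i, 1 ≤ i ∧ i ≤ k ∧ m i = x)
    (hsm : StrictMonoOn m (Set.Icc 1 (k + 1)))
    (hmk : m (k + 1) = n) :
    ∀ i, 1 ≤ i → i ≤ k → ∀ ε : ℝ, 0 < ε →
      (∀ j : ℕ, (1 + ε) ^ j * w (m i) < ∑ j' ∈ Finset.Icc 1 (m (i + 1) - 1), w j' →
        (j : ℝ) < ((m (i + 1) : ℝ) - (m i : ℝ)) * (Real.log 2 / Real.log (1 + ε))) ∧
      (jump (w (m i)) (∑ j' ∈ Finset.Icc 1 (m (i + 1) - 1), w j') (1 + ε)).Finite ∧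
      ((jump (w (m i)) (∑ j' ∈ Finset.Icc 1 (m (i + 1) - 1), w j') (1 + ε)).ncard : ℝ) ≤
        ((m (i + 1) : ℝ) - (m i : ℝ)) * (Real.log 2 / Real.log (1 + ε)) + 2 := by
  intro i hi1 hik ε hε
  set a := m i with ha
  set b := m (i + 1) with hb
  have hτ : (1:ℝ) < 1 + ε := by linarith
  have himem : i ∈ Set.Icc 1 (k+1) := ⟨hi1, by omega⟩
  have hi1mem : i + 1 ∈ Set.Icc 1 (k+1) := ⟨by omega, by omega⟩
  have hab : a < b := hsm himem hi1mem (by omega)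
  have hbn : b ≤ n := by
    have := hsm.monotoneOn hi1mem ⟨by omega, le_refl _⟩ (by omega)
    rwa [hmk] at this
  obtain ⟨⟨ha1, han⟩, haS⟩ := (hI a).mpr ⟨i, hi1, hik, rfl⟩
  set S : ℕ → ℝ := fun x => ∑ j' ∈ Finset.Icc 1 x, w j' with hSdef
  have hSstep : ∀ y : ℕ, S (y+1) = S y + w (y+1) := fun y =>
    Finset.sum_Icc_succ_top (by omega) w
  have hnotI : ∀ x, a < x → x ≤ b - 1 → w x ≤ S (x - 1) := by
    intro x hax hxb
    by_contra h
    push_neg at h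
    obtain ⟨i', hi'1, hi'k, hmi'⟩ := (hI x).mp ⟨⟨by omega, by omega⟩, h⟩
    rcases lt_or_ge i' (i+1) with h1 | h1
    · have : m i' ≤ a := hsm.monotoneOn ⟨hi'1, by omega⟩ himem (by omega)
      omega
    · have : b ≤ m i' := hsm.monotoneOn hi1mem ⟨by omega, by omega⟩ h1
      omega
  have hwa : 0 < w a := hpos a ha1 han
  have key : ∀ d : ℕ, a + d ≤ b - 1 → S (a + d) < 2^(d+1) * w a := by
    intro d
    induction d with
    | zero =>
      intro _
      have h1 : S a = S (a-1) + w a := by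
        have := hSstep (a-1)
        rwa [Nat.sub_add_cancel ha1] at this
      rw [Nat.add_zero, h1, pow_one]
      linarith [haS]
    | succ d ih =>
      intro hd
      have ihv := ih (by omega)
      have hx := hnotI (a + d + 1) (by omega) (by omega)
      rw [Nat.add_sub_cancel] at hx
      have h1 : S (a + (d+1)) = S (a + d) + w (a+d+1) := by
        rw [← Nat.add_assoc]; exact hSstep (a+d)
      rw [h1]
      have : (2:ℝ)^(d+1+1) * w a = 2 * (2^(d+1) * w a) := by ring
      rw [this]
      linarith
  have hs : S (b-1) < 2^(b-a) * w a := by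
    have h := key (b - 1 - a) (by omega)
    rw [show a + (b - 1 - a) = b - 1 by omega, show (b - 1 - a) + 1 = b - a by omega] at h
    exact h
  have hL : 0 < Real.log (1+ε) := Real.log_pos hτ
  have claim1 : ∀ j : ℕ, (1+ε)^j * w a < S (b-1) →
      (j : ℝ) < ((b:ℝ) - (a:ℝ)) * (Real.log 2 / Real.log (1+ε)) := by
    intro j hj
    have h2 : (1+ε)^j < 2^(b-a) := lt_of_mul_lt_mul_right (hj.trans hs) hwa.le
    have h3 := Real.log_lt_log (by positivity) h2
    rw [Real.log_pow, Real.log_pow, Nat.cast_sub hab.le] at h3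
    rw [← mul_div_assoc, lt_div_iff₀ hL]
    linarith
  refine ⟨claim1, ?_⟩
  set β := S (b-1) with hβ
  set c := ((b:ℝ) - (a:ℝ)) * (Real.log 2 / Real.log (1+ε)) with hc
  have hc0 : 0 ≤ c := by
    apply mul_nonneg
    · have : (a:ℝ) ≤ (b:ℝ) := by exact_mod_cast hab.le
      linarith
    · exact div_nonneg (Real.log_nonneg (by norm_num)) hL.le
  set N := ⌈c⌉₊ with hN
  have hsub : jump (w a) β (1+ε) ⊆
      (fun j : ℕ => (1+ε)^j * w a) '' ↑(Finset.range N) ∪ {β} := by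
    rintro x (⟨j, rfl, hj⟩ | hx)
    · left
      refine ⟨j, ?_, rfl⟩
      simp only [Finset.coe_range, Set.mem_Iio]
      have h1 : (j:ℝ) < (N:ℝ) := (claim1 j hj).trans_le (Nat.le_ceil c)
      exact_mod_cast h1
    · right; exact hx
  have hfin : ((fun j : ℕ => (1+ε)^j * w a) '' ↑(Finset.range N) ∪ {β}).Finite :=
    ((Finset.range N).finite_toSet.image _).union (Set.finite_singleton β)
  refine ⟨hfin.subset hsub, ?_⟩
  have hcard : (jump (w a) β (1+ε)).ncard ≤ N + 1 := by
    calc (jump (w a) β (1+ε)).ncard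
        ≤ ((fun j : ℕ => (1+ε)^j * w a) '' ↑(Finset.range N) ∪ {β}).ncard :=
          Set.ncard_le_ncard hsub hfin
      _ ≤ ((fun j : ℕ => (1+ε)^j * w a) '' ↑(Finset.range N)).ncard + ({β} : Set ℝ).ncard :=
          Set.ncard_union_le _ _
      _ ≤ (↑(Finset.range N) : Set ℕ).ncard + 1 := by
          rw [Set.ncard_singleton]
          exact Nat.add_le_add_right (Set.ncard_image_le (Finset.range N).finite_toSet) 1
      _ = N + 1 := by rw [Set.ncard_coe_finset, Finset.card_range]
  have h1 : ((jump (w a) β (1+ε)).ncard : ℝ) ≤ (N:ℝ) + 1 := by exact_mod_cast hcard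
  have h2 : (N:ℝ) < c + 1 := Nat.ceil_lt_add_one hc0
  linarith
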